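/- Let P be a product probability density on bitstrings of length n, let m ≥ 1, and let {S_κ}_{κ} be a finite partition of {0,1}^n into classes such that within each class any two distinct bitstrings have Hamming distance at least m. Let g : {0,1}^n → ℝ. For each class κ with W_κ := ∑_{z∈S_κ} P(z) > 0, set μ_κ := W_κ^{−1} ∑_{z∈S_κ} P(z) g(z), and let osc_κ := max_{z∈S_κ} g(z) − min_{z∈S_κ} g(z). Then ∑_{κ : W_κ > 0} ∑_{z∈S_κ} P(z) (g(z) − μ_κ)² ≤ ( ∑_{ℓ=0}^{⌊(m−1)/2⌋} C(m,ℓ) )^{−1} · ∑_{κ} osc_κ². -/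
import Mathlib

open Finset

lemma cnt_mem_powersetCard {α : Type*} [DecidableEq α] (D : Finset α) {i : α} (hi : i ∈ D)
    (ℓ : ℕ) :
    ((D.powersetCard (ℓ+1)).filter (fun T => i ∈ T)).card = (D.card - 1).choose ℓ := by
  rw [← Finset.card_erase_of_mem hi, ← Finset.card_powersetCard ℓ (D.erase i)]
  refine Finset.card_bij' (fun T _ => T.erase i) (fun U _ => insert i U) ?_ ?_ ?_ ?_
  · intro T hT
    simp only [Finset.mem_filter, Finset.mem_powersetCard] at hT
    simp only [Finset.mem_powersetCard]
    exact ⟨Finset.erase_subset_erase i hT.1.1,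
      by rw [Finset.card_erase_of_mem hT.2, hT.1.2]; omega⟩
  · intro U hU
    simp only [Finset.mem_powersetCard] at hU
    have hiU : i ∉ U := fun h => (Finset.mem_erase.1 (hU.1 h)).1 rfl
    simp only [Finset.mem_filter, Finset.mem_powersetCard]
    refine ⟨⟨?_, ?_⟩, Finset.mem_insert_self i U⟩
    · intro x hx
      rcases Finset.mem_insert.1 hx with h | h
      · exact h ▸ hi
      · exact Finset.mem_of_mem_erase (hU.1 h)
    · rw [Finset.card_insert_of_notMem hiU, hU.2]
  · intro T hT
    simp only [Finset.mem_filter] at hT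
    exact Finset.insert_erase hT.2
  · intro U hU
    simp only [Finset.mem_powersetCard] at hU
    exact Finset.erase_insert (fun h => (Finset.mem_erase.1 (hU.1 h)).1 rfl)

lemma esymm_ge {α : Type*} [DecidableEq α] (D : Finset α) (ρ : α → ℝ)
    (h0 : ∀ i ∈ D, 0 ≤ ρ i) (h1 : 1 ≤ ∏ i ∈ D, ρ i) {ℓ : ℕ} (hℓ : ℓ ≤ D.card) :
    (D.card.choose ℓ : ℝ) ≤ ∑ T ∈ D.powersetCard ℓ, ∏ i ∈ T, ρ i := by
  have hz : ∀ T ∈ D.powersetCard ℓ, 0 ≤ ∏ i ∈ T, ρ i := by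
    intro T hT
    exact Finset.prod_nonneg fun i hiT => h0 i ((Finset.mem_powersetCard.1 hT).1 hiT)
  have hprodprod : (1:ℝ) ≤ ∏ T ∈ D.powersetCard ℓ, ∏ i ∈ T, ρ i := by
    rcases Nat.eq_zero_or_pos ℓ with rfl | hℓpos
    · simp [Finset.powersetCard_zero]
    · obtain ⟨k, rfl⟩ : ∃ k, ℓ = k + 1 := ⟨ℓ - 1, (Nat.succ_pred_eq_of_pos hℓpos).symm⟩
      have step1 : ∀ T ∈ D.powersetCard (k+1), ∏ i ∈ T, ρ i
          = ∏ i ∈ D, (if i ∈ T then ρ i else 1) := by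
        intro T hT
        have hTD : T ⊆ D := (Finset.mem_powersetCard.1 hT).1
        rw [← Finset.prod_sdiff hTD]
        have h2 : ∏ i ∈ D \ T, (if i ∈ T then ρ i else 1) = 1 :=
          Finset.prod_eq_one fun i hiT => if_neg (Finset.mem_sdiff.1 hiT).2
        have h3 : ∏ i ∈ T, (if i ∈ T then ρ i else 1) = ∏ i ∈ T, ρ i :=
          Finset.prod_congr rfl fun i hiT => if_pos hiT
        rw [h2, h3, one_mul]
      rw [Finset.prod_congr rfl step1, Finset.prod_comm]
      have step2 : ∀ i ∈ D, ∏ T ∈ D.powersetCard (k+1), (if i ∈ T then ρ i else 1)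
          = ρ i ^ (D.card - 1).choose k := by
        intro i hi
        rw [Finset.prod_ite, Finset.prod_const, Finset.prod_const, one_pow, mul_one,
          cnt_mem_powersetCard D hi k]
      rw [Finset.prod_congr rfl step2, Finset.prod_pow]
      exact one_le_pow₀ h1
  have hN : 0 < D.card.choose ℓ := Nat.choose_pos hℓ
  have hNR : (0:ℝ) < (D.card.choose ℓ : ℝ) := by exact_mod_cast hN
  have hcard : (D.powersetCard ℓ).card = D.card.choose ℓ := Finset.card_powersetCard ℓ D
  have hw : ∑ T ∈ D.powersetCard ℓ, ((D.card.choose ℓ : ℝ))⁻¹ = 1 := by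
    rw [Finset.sum_const, hcard, nsmul_eq_mul, mul_inv_cancel₀ (ne_of_gt hNR)]
  have amgm := Real.geom_mean_le_arith_mean_weighted (D.powersetCard ℓ)
    (fun _ => ((D.card.choose ℓ : ℝ))⁻¹) (fun T => ∏ i ∈ T, ρ i)
    (fun _ _ => inv_nonneg.2 hNR.le) hw hz
  have hgm : (1:ℝ) ≤ ∏ T ∈ D.powersetCard ℓ, (∏ i ∈ T, ρ i) ^ ((D.card.choose ℓ : ℝ))⁻¹ := by
    rw [Real.finset_prod_rpow _ _ hz]
    exact Real.one_le_rpow hprodprod (inv_nonneg.2 hNR.le)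
  have key : (1:ℝ) ≤ ∑ T ∈ D.powersetCard ℓ, ((D.card.choose ℓ : ℝ))⁻¹ * ∏ i ∈ T, ρ i :=
    le_trans hgm amgm
  rw [← Finset.mul_sum] at key
  calc (D.card.choose ℓ : ℝ) = (D.card.choose ℓ : ℝ) * 1 := (mul_one _).symm
    _ ≤ (D.card.choose ℓ : ℝ) * (((D.card.choose ℓ : ℝ))⁻¹ * ∑ T ∈ D.powersetCard ℓ, ∏ i ∈ T, ρ i) := by
        exact mul_le_mul_of_nonneg_left key hNR.le
    _ = ∑ T ∈ D.powersetCard ℓ, ∏ i ∈ T, ρ i := by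
        rw [← mul_assoc, mul_inv_cancel₀ (ne_of_gt hNR), one_mul]

lemma packing_bound {n m : ℕ} (hm : 1 ≤ m) (q : Fin n → ℝ) (hq : ∀ i, 0 ≤ q i ∧ q i ≤ 1)
    (P : (Fin n → Bool) → ℝ)
    (hP : ∀ x, P x = ∏ i, if x i then q i else 1 - q i)
    (s : Finset (Fin n → Bool))
    (hd : ∀ z ∈ s, ∀ z' ∈ s, z ≠ z' → m ≤ hammingDist z z')
    {w : Fin n → Bool} (hw : w ∈ s) (hmax : ∀ z ∈ s, P z ≤ P w) :
    (∑ ℓ ∈ Finset.range ((m-1)/2 + 1), (m.choose ℓ : ℝ)) * ∑ z ∈ s.erase w, P z ≤ 1 := by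
  classical
  set r := (m-1)/2 with hr
  set F : Fin n → Bool → ℝ := fun i b => if b then q i else 1 - q i with hF
  have hPF : ∀ x, P x = ∏ i, F i (x i) := hP
  have hF0 : ∀ i b, 0 ≤ F i b := by
    intro i b; cases b <;> simp [hF] <;> [linarith [(hq i).2]; exact (hq i).1]
  have hP0 : ∀ x, 0 ≤ P x := fun x => (hPF x) ▸ Finset.prod_nonneg fun i _ => hF0 i (x i)
  have hPsum : ∑ x : Fin n → Bool, P x = 1 := by
    simp_rw [hPF]
    rw [← Fintype.piFinset_univ, ← Finset.prod_univ_sum]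
    apply Finset.prod_eq_one
    intro i _
    simp [hF, Fintype.sum_bool]
  set D : (Fin n → Bool) → Finset (Fin n) :=
    fun z => Finset.univ.filter (fun j => z j ≠ w j) with hD
  have hDdist : ∀ z, hammingDist z w = (D z).card := fun z => rfl
  set flp : (Fin n → Bool) → Finset (Fin n) → (Fin n → Bool) :=
    fun z T j => if j ∈ T then w j else z j with hflp
  set ball : (Fin n → Bool) → Finset (Fin n → Bool) :=
    fun z => Finset.univ.filter (fun y => hammingDist y z ≤ r) with hball
  have h2r : 2 * r ≤ m - 1 := by rw [hr]; omega
  -- Step A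
  have stepA : ∀ z ∈ s.erase w,
      (∑ ℓ ∈ Finset.range (r + 1), (m.choose ℓ : ℝ)) * P z ≤ ∑ y ∈ ball z, P y := by
    intro z hz
    obtain ⟨hzw, hzs⟩ := Finset.mem_erase.1 hz
    have hmd : m ≤ (D z).card := by rw [← hDdist]; exact hd z hzs w hw hzw
    set U : Finset (Finset (Fin n)) :=
      (D z).powerset.filter (fun T => T.card ≤ r) with hU
    -- flips land in the ball, injectively
    have hflip_dist : ∀ T ∈ U, hammingDist (flp z T) z = T.card := by
      intro T hT
      obtain ⟨hTD, -⟩ := Finset.mem_filter.1 hT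
      rw [Finset.mem_powerset] at hTD
      show (Finset.univ.filter (fun j => flp z T j ≠ z j)).card = T.card
      congr 1
      ext j
      simp only [Finset.mem_filter, Finset.mem_univ, true_and, hflp]
      by_cases hj : j ∈ T
      · have : z j ≠ w j := (Finset.mem_filter.1 (hTD hj)).2
        simp [hj, Ne.symm this]
      · simp [hj]
    have hflip_inj : ∀ T ∈ U, ∀ T' ∈ U, flp z T = flp z T' → T = T' := by
      have sub : ∀ T ∈ U, ∀ T' ∈ U, flp z T = flp z T' → T ⊆ T' := by
        intro T hT T' hT' he j hj
        obtain ⟨hTD, -⟩ := Finset.mem_filter.1 hT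
        rw [Finset.mem_powerset] at hTD
        have hjD : z j ≠ w j := (Finset.mem_filter.1 (hTD hj)).2
        by_contra hj'
        have h1 : flp z T j = w j := by simp [hflp, hj]
        have h2 : flp z T' j = z j := by simp [hflp, hj']
        rw [he, h2] at h1
        exact hjD h1
      intro T hT T' hT' he
      exact Finset.Subset.antisymm (sub T hT T' hT' he) (sub T' hT' T hT he.symm)
    have himg : U.image (flp z) ⊆ ball z := by
      intro y hy
      obtain ⟨T, hT, rfl⟩ := Finset.mem_image.1 hy
      rw [hball, Finset.mem_filter]
      refine ⟨Finset.mem_univ _, ?_⟩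
      rw [hflip_dist T hT]
      exact (Finset.mem_filter.1 hT).2
    by_cases hPz : P z = 0
    · rw [hPz, mul_zero]
      exact Finset.sum_nonneg fun y _ => hP0 y
    have hPzpos : 0 < P z := lt_of_le_of_ne (hP0 z) (Ne.symm hPz)
    have hfac : ∀ j, 0 < F j (z j) := by
      intro j
      rcases lt_or_eq_of_le (hF0 j (z j)) with h | h
      · exact h
      · exfalso; apply hPz
        rw [hPF]
        exact Finset.prod_eq_zero (Finset.mem_univ j) h.symm
    set ρ : Fin n → ℝ := fun j => F j (w j) / F j (z j) with hρ
    have hρ0 : ∀ j, 0 ≤ ρ j := fun j => div_nonneg (hF0 _ _) (hfac j).le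
    -- product of ρ over D z is ≥ 1
    have hsplit : ∀ (x : Fin n → Bool), (∀ j, j ∉ D z → x j = z j) →
        P x = (∏ j ∈ Finset.univ \ D z, F j (z j)) * ∏ j ∈ D z, F j (x j) := by
      intro x hx
      rw [hPF, ← Finset.prod_sdiff (Finset.subset_univ (D z))]
      congr 1
      exact Finset.prod_congr rfl fun j hj => by
        rw [hx j (Finset.mem_sdiff.1 hj).2]
    have hwz : ∀ j, j ∉ D z → w j = z j := by
      intro j hj
      have := Finset.mem_filter.not.1 hj
      simp only [Finset.mem_univ, true_and] at this
      exact (not_not.1 this).symm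
    have hA : 0 < ∏ j ∈ Finset.univ \ D z, F j (z j) :=
      Finset.prod_pos fun j _ => hfac j
    have hPzeq : P z = (∏ j ∈ Finset.univ \ D z, F j (z j)) * ∏ j ∈ D z, F j (z j) :=
      hsplit z (fun _ _ => rfl)
    have hPweq : P w = (∏ j ∈ Finset.univ \ D z, F j (z j)) * ∏ j ∈ D z, F j (w j) :=
      hsplit w hwz
    have hprodle : ∏ j ∈ D z, F j (z j) ≤ ∏ j ∈ D z, F j (w j) := by
      have := hmax z hzs
      rw [hPzeq, hPweq] at this
      exact le_of_mul_le_mul_left this hA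
    have hDzpos : 0 < ∏ j ∈ D z, F j (z j) := Finset.prod_pos fun j _ => hfac j
    have hρprod : 1 ≤ ∏ j ∈ D z, ρ j := by
      rw [hρ]
      rw [Finset.prod_div_distrib]
      rw [one_le_div hDzpos]
      exact hprodle
    -- P of a flip
    have hPflip : ∀ T ∈ U, P (flp z T) = P z * ∏ j ∈ T, ρ j := by
      intro T hT
      obtain ⟨hTD, -⟩ := Finset.mem_filter.1 hT
      rw [Finset.mem_powerset] at hTD
      rw [hPF, ← Finset.prod_sdiff (Finset.subset_univ T)]
      have e1 : ∏ j ∈ Finset.univ \ T, F j (flp z T j) = ∏ j ∈ Finset.univ \ T, F j (z j) :=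
        Finset.prod_congr rfl fun j hj => by
          rw [show flp z T j = z j from if_neg (Finset.mem_sdiff.1 hj).2]
      have e2 : ∏ j ∈ T, F j (flp z T j) = ∏ j ∈ T, F j (w j) :=
        Finset.prod_congr rfl fun j hj => by
          rw [show flp z T j = w j from if_pos hj]
      rw [e1, e2]
      have e3 : P z = (∏ j ∈ Finset.univ \ T, F j (z j)) * ∏ j ∈ T, F j (z j) := by
        rw [hPF, ← Finset.prod_sdiff (Finset.subset_univ T)]
      rw [e3, mul_assoc, ← Finset.prod_mul_distrib]
      congr 1
      refine Finset.prod_congr rfl fun j _ => ?_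
      rw [hρ]
      field_simp [ne_of_gt (hfac j)]
    -- per-ℓ bound
    have perℓ : ∀ ℓ ∈ Finset.range (r + 1),
        (m.choose ℓ : ℝ) * P z ≤ ∑ T ∈ (D z).powersetCard ℓ, P (flp z T) := by
      intro ℓ hℓ
      rw [Finset.mem_range] at hℓ
      have hℓr : ℓ ≤ r := by omega
      have hℓd : ℓ ≤ (D z).card := by omega
      have hsum : ∑ T ∈ (D z).powersetCard ℓ, P (flp z T)
          = P z * ∑ T ∈ (D z).powersetCard ℓ, ∏ j ∈ T, ρ j := by
        rw [Finset.mul_sum]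
        refine Finset.sum_congr rfl fun T hT => ?_
        apply hPflip
        rw [hU, Finset.mem_filter, Finset.mem_powerset]
        obtain ⟨h1, h2⟩ := Finset.mem_powersetCard.1 hT
        exact ⟨h1, by omega⟩
      rw [hsum]
      have hesymm := esymm_ge (D z) ρ (fun j _ => hρ0 j) hρprod hℓd
      have hchoose : (m.choose ℓ : ℝ) ≤ ((D z).card.choose ℓ : ℝ) := by
        exact_mod_cast Nat.choose_le_choose ℓ hmd
      calc (m.choose ℓ : ℝ) * P z ≤ (∑ T ∈ (D z).powersetCard ℓ, ∏ j ∈ T, ρ j) * P z := by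
            apply mul_le_mul_of_nonneg_right _ hPzpos.le
            exact le_trans hchoose hesymm
        _ = P z * ∑ T ∈ (D z).powersetCard ℓ, ∏ j ∈ T, ρ j := mul_comm _ _
    -- reindex over U
    have hreindex : ∑ ℓ ∈ Finset.range (r + 1), ∑ T ∈ (D z).powersetCard ℓ, P (flp z T)
        = ∑ T ∈ U, P (flp z T) := by
      rw [← Finset.sum_fiberwise_of_maps_to (g := Finset.card)
        (fun T hT => Finset.mem_range.2 (Nat.lt_succ_of_le (Finset.mem_filter.1 hT).2))]
      refine Finset.sum_congr rfl fun ℓ hℓ => ?_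
      rw [Finset.mem_range] at hℓ
      congr 1
      rw [Finset.powersetCard_eq_filter, Finset.filter_filter]
      exact Finset.filter_congr fun T _ => by omega
    calc (∑ ℓ ∈ Finset.range (r + 1), (m.choose ℓ : ℝ)) * P z
        = ∑ ℓ ∈ Finset.range (r + 1), (m.choose ℓ : ℝ) * P z := by rw [Finset.sum_mul]
      _ ≤ ∑ ℓ ∈ Finset.range (r + 1), ∑ T ∈ (D z).powersetCard ℓ, P (flp z T) :=
          Finset.sum_le_sum perℓ
      _ = ∑ T ∈ U, P (flp z T) := hreindex
      _ = ∑ y ∈ U.image (flp z), P y := (Finset.sum_image hflip_inj).symm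
      _ ≤ ∑ y ∈ ball z, P y :=
          Finset.sum_le_sum_of_subset_of_nonneg himg (fun y _ _ => hP0 y)
  -- Step B: balls pairwise disjoint on s
  have hballdisj : ∀ z ∈ s, ∀ z' ∈ s, z ≠ z' → Disjoint (ball z) (ball z') := by
    intro z hz z' hz' hne
    rw [Finset.disjoint_left]
    intro y hy hy'
    rw [hball, Finset.mem_filter] at hy hy'
    have h1 : m ≤ hammingDist z z' := hd z hz z' hz' hne
    have h2 : hammingDist z z' ≤ hammingDist z y + hammingDist y z' := hammingDist_triangle z y z'
    rw [hammingDist_comm z y] at h2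
    omega
  -- Step C: combine
  have hC : ∑ z ∈ s.erase w, ∑ y ∈ ball z, P y ≤ 1 := by
    rw [← Finset.sum_biUnion (by
      intro z hz z' hz' hne
      exact hballdisj z (Finset.mem_of_mem_erase (Finset.mem_coe.1 hz))
        z' (Finset.mem_of_mem_erase (Finset.mem_coe.1 hz')) hne)]
    rw [← hPsum]
    exact Finset.sum_le_sum_of_subset_of_nonneg (Finset.subset_univ _) (fun y _ _ => hP0 y)
  calc (∑ ℓ ∈ Finset.range (r + 1), (m.choose ℓ : ℝ)) * ∑ z ∈ s.erase w, P z
      = ∑ z ∈ s.erase w, (∑ ℓ ∈ Finset.range (r + 1), (m.choose ℓ : ℝ)) * P z := by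
        rw [Finset.mul_sum]
    _ ≤ ∑ z ∈ s.erase w, ∑ y ∈ ball z, P y := Finset.sum_le_sum stepA
    _ ≤ 1 := hC

lemma var_min {α : Type*} (s : Finset α) (P g : α → ℝ)
    (hW : 0 < ∑ z ∈ s, P z) (a : ℝ) :
    ∑ z ∈ s, P z * (g z - (∑ z ∈ s, P z)⁻¹ * ∑ z ∈ s, P z * g z) ^ 2
      ≤ ∑ z ∈ s, P z * (g z - a) ^ 2 := by
  set W := ∑ z ∈ s, P z with hWdef
  set μ := W⁻¹ * ∑ z ∈ s, P z * g z with hμ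
  have hμW : W * μ = ∑ z ∈ s, P z * g z := by
    rw [hμ, ← mul_assoc, mul_inv_cancel₀ hW.ne', one_mul]
  have key : ∑ z ∈ s, P z * (g z - a) ^ 2
      = (∑ z ∈ s, P z * (g z - μ) ^ 2) + (2*(μ-a)) * (∑ z ∈ s, P z * g z)
        - (2*(μ-a)*μ) * W + (μ-a)^2 * W := by
    rw [hWdef, Finset.mul_sum, Finset.mul_sum, Finset.mul_sum, ← Finset.sum_add_distrib,
      ← Finset.sum_sub_distrib, ← Finset.sum_add_distrib]
    exact Finset.sum_congr rfl fun z _ => by ring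
  have key2 : ∑ z ∈ s, P z * (g z - a) ^ 2
      = (∑ z ∈ s, P z * (g z - μ) ^ 2) + (μ-a)^2 * W := by
    rw [key, ← hμW]; ring
  rw [key2]
  have : 0 ≤ (μ-a)^2 * W := mul_nonneg (sq_nonneg _) hW.le
  linarith



open Classical in
/-- Paper: bound `𝓕_G^{sep} ≤ c ∑_κ ‖G_κ‖²_Spec` on the QFI
of a product sensor state under strong correlated noise.
Let `P` be a product probability density on bitstrings of length `n`, `m ≥ 1`,
and `{S κ}` a finite partition of `{0,1}^n` into (nonempty) classes within each
of which any two distinct bitstrings have Hamming distance at least `m`. For a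
function `g` and each class `κ` with weight `W κ = ∑_{z∈S κ} P z > 0`, let
`μ κ = (W κ)⁻¹ ∑_{z∈S κ} P z · g z` and
`osc κ = max_{z∈S κ} g z − min_{z∈S κ} g z`. Then
`∑_{κ : W κ > 0} ∑_{z∈S κ} P z (g z − μ κ)²
  ≤ (∑_{ℓ=0}^{⌊(m−1)/2⌋} C(m,ℓ))⁻¹ · ∑_κ (osc κ)²`. -/
theorem separable_fisher_info_le
    (n m : ℕ) (hm : 1 ≤ m) (q : Fin n → ℝ) (hq : ∀ i, 0 ≤ q i ∧ q i ≤ 1)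
    (P : (Fin n → Bool) → ℝ)
    (hP : ∀ x, P x = ∏ i, if x i then q i else 1 - q i)
    {K : Type*} [Fintype K] (S : K → Finset (Fin n → Bool))
    (hne : ∀ κ, (S κ).Nonempty)
    (hdisj : ∀ κ κ', κ ≠ κ' → Disjoint (S κ) (S κ'))
    (hcover : ∀ x, ∃ κ, x ∈ S κ)
    (hdist : ∀ κ, ∀ z ∈ S κ, ∀ z' ∈ S κ, z ≠ z' → m ≤ hammingDist z z')
    (g : (Fin n → Bool) → ℝ) :
    ∑ κ ∈ Finset.univ.filter (fun κ => 0 < ∑ z ∈ S κ, P z),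
        ∑ z ∈ S κ, P z * (g z - (∑ z ∈ S κ, P z)⁻¹ * ∑ z ∈ S κ, P z * g z) ^ 2
      ≤ (∑ ℓ ∈ Finset.range ((m - 1) / 2 + 1), (m.choose ℓ : ℝ))⁻¹
        * ∑ κ, ((S κ).sup' (hne κ) g - (S κ).inf' (hne κ) g) ^ 2 := by
  classical
  set c := ∑ ℓ ∈ Finset.range ((m - 1) / 2 + 1), (m.choose ℓ : ℝ) with hc
  have hP0 : ∀ x, 0 ≤ P x := by
    intro x
    rw [hP x]
    refine Finset.prod_nonneg fun i _ => ?_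
    by_cases h : x i <;> simp [h]
    · exact (hq i).1
    · linarith [(hq i).2]
  have hc1 : (1:ℝ) ≤ c := by
    rw [hc]
    have h0 : ((m.choose 0 : ℕ) : ℝ) = 1 := by simp
    calc (1:ℝ) = (m.choose 0 : ℝ) := h0.symm
      _ ≤ _ := Finset.single_le_sum (f := fun ℓ => ((m.choose ℓ : ℕ) : ℝ))
          (fun ℓ _ => by positivity) (Finset.mem_range.2 (Nat.succ_pos _))
  have hc0 : (0:ℝ) < c := lt_of_lt_of_le one_pos hc1
  -- per class bound
  have perκ : ∀ κ ∈ Finset.univ.filter (fun κ => 0 < ∑ z ∈ S κ, P z),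
      ∑ z ∈ S κ, P z * (g z - (∑ z ∈ S κ, P z)⁻¹ * ∑ z ∈ S κ, P z * g z) ^ 2
        ≤ c⁻¹ * ((S κ).sup' (hne κ) g - (S κ).inf' (hne κ) g) ^ 2 := by
    intro κ hκ
    have hW : 0 < ∑ z ∈ S κ, P z := (Finset.mem_filter.1 hκ).2
    obtain ⟨w, hw, hmax⟩ := Finset.exists_max_image (S κ) P (hne κ)
    set osc := (S κ).sup' (hne κ) g - (S κ).inf' (hne κ) g with hosc
    have hsq : ∀ z ∈ S κ, (g z - g w) ^ 2 ≤ osc ^ 2 := by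
      intro z hz
      apply sq_le_sq'
      · have h1 : g z ≥ (S κ).inf' (hne κ) g := Finset.inf'_le g hz
        have h2 : g w ≤ (S κ).sup' (hne κ) g := Finset.le_sup' g hw
        rw [hosc]; linarith
      · have h1 : g z ≤ (S κ).sup' (hne κ) g := Finset.le_sup' g hz
        have h2 : g w ≥ (S κ).inf' (hne κ) g := Finset.inf'_le g hw
        rw [hosc]; linarith
    have hpack := packing_bound hm q hq P hP (S κ) (hdist κ) hw hmax
    have hsumerase : ∑ z ∈ (S κ).erase w, P z ≤ c⁻¹ := by
      calc ∑ z ∈ (S κ).erase w, P z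
          = c⁻¹ * (c * ∑ z ∈ (S κ).erase w, P z) := by
            rw [← mul_assoc, inv_mul_cancel₀ hc0.ne', one_mul]
        _ ≤ c⁻¹ * 1 := by
            apply mul_le_mul_of_nonneg_left _ (inv_nonneg.2 hc0.le)
            exact hpack
        _ = c⁻¹ := mul_one _
    calc ∑ z ∈ S κ, P z * (g z - (∑ z ∈ S κ, P z)⁻¹ * ∑ z ∈ S κ, P z * g z) ^ 2
        ≤ ∑ z ∈ S κ, P z * (g z - g w) ^ 2 := var_min (S κ) P g hW (g w)
      _ = ∑ z ∈ (S κ).erase w, P z * (g z - g w) ^ 2 :=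
          (Finset.sum_erase _ (by simp)).symm
      _ ≤ ∑ z ∈ (S κ).erase w, P z * osc ^ 2 := by
          refine Finset.sum_le_sum fun z hz => ?_
          exact mul_le_mul_of_nonneg_left
            (hsq z (Finset.mem_of_mem_erase hz)) (hP0 z)
      _ = (∑ z ∈ (S κ).erase w, P z) * osc ^ 2 := by rw [Finset.sum_mul]
      _ ≤ c⁻¹ * osc ^ 2 := mul_le_mul_of_nonneg_right hsumerase (sq_nonneg _)
  calc ∑ κ ∈ Finset.univ.filter (fun κ => 0 < ∑ z ∈ S κ, P z),
        ∑ z ∈ S κ, P z * (g z - (∑ z ∈ S κ, P z)⁻¹ * ∑ z ∈ S κ, P z * g z) ^ 2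
      ≤ ∑ κ ∈ Finset.univ.filter (fun κ => 0 < ∑ z ∈ S κ, P z),
          c⁻¹ * ((S κ).sup' (hne κ) g - (S κ).inf' (hne κ) g) ^ 2 :=
        Finset.sum_le_sum perκ
    _ = c⁻¹ * ∑ κ ∈ Finset.univ.filter (fun κ => 0 < ∑ z ∈ S κ, P z),
          ((S κ).sup' (hne κ) g - (S κ).inf' (hne κ) g) ^ 2 := by rw [Finset.mul_sum]
    _ ≤ c⁻¹ * ∑ κ, ((S κ).sup' (hne κ) g - (S κ).inf' (hne κ) g) ^ 2 := by
        apply mul_le_mul_of_nonneg_left _ (inv_nonneg.2 hc0.le)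
        exact Finset.sum_le_sum_of_subset_of_nonneg (Finset.filter_subset _ _)
          (fun κ _ _ => sq_nonneg _)
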